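/- Let β ∈ (0, 1/2). Then sup{ ∑_{t=0}^∞ β^t (l_t − c_t) : (c_t) a bounded sequence with c_t ≥ 0 for all t, l_t ∈ [0,1] for all t, and ∑_{t=0}^∞ β^t (√c_t − √l_t) ≥ 0 } = β, and the supremum is attained by l_0 = 1, l_t = 0 for t ≥ 1, and c_t = (1 − β)² for all t. -/

import Mathlib

private lemma aux_summable {β M : ℝ} (hβ0 : 0 ≤ β) (hβ1 : β < 1) {f : ℕ → ℝ}
    (h0 : ∀ t, 0 ≤ f t) (hM : ∀ t, f t ≤ M) :
    Summable (fun t : ℕ => β ^ t * f t) := by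
  refine Summable.of_nonneg_of_le (fun t => mul_nonneg (pow_nonneg hβ0 t) (h0 t))
    (fun t => ?_) ((summable_geometric_of_lt_one hβ0 hβ1).mul_left M)
  rw [mul_comm]
  exact mul_le_mul_of_nonneg_right (hM t) (pow_nonneg hβ0 t)

private lemma aux_ind_summable (a : ℝ) :
    Summable (fun t : ℕ => if t = 0 then a else 0) := by
  apply summable_of_ne_finset_zero (s := {0})
  intro b hb
  simp at hb
  simp [hb]

set_option maxHeartbeats 1000000 in
/-- **the optimal deterministic value `V⁰ = β` in Example 1.**
For `β ∈ (0, 1/2)`, among all bounded nonnegative consumption plans `(c_t)` and labor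
plans `(l_t)` with `l_t ∈ [0,1]` satisfying the participation constraint
`∑ β^t (√c_t − √l_t) ≥ 0`, the supremum of `∑ β^t (l_t − c_t)` equals `β` and is
attained by `l₀ = 1`, `l_t = 0` for `t ≥ 1`, `c_t = (1 − β)²` for all `t`. -/
theorem stmt17 (β : ℝ) (hβ0 : 0 < β) (hβ1 : β < 1 / 2) :
    IsGreatest {z : ℝ | ∃ c l : ℕ → ℝ,
        (∃ C : ℝ, ∀ t, c t ≤ C) ∧ (∀ t, 0 ≤ c t) ∧ (∀ t, 0 ≤ l t ∧ l t ≤ 1) ∧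
        0 ≤ (∑' t : ℕ, β ^ t * (Real.sqrt (c t) - Real.sqrt (l t))) ∧
        z = ∑' t : ℕ, β ^ t * (l t - c t)} β
    ∧ (0 ≤ ∑' t : ℕ, β ^ t * (Real.sqrt ((1 - β) ^ 2)
          - Real.sqrt (if t = 0 then (1 : ℝ) else 0)))
    ∧ (∑' t : ℕ, β ^ t * ((if t = 0 then (1 : ℝ) else 0) - (1 - β) ^ 2)) = β := by
  have hβ2 : β < 1 := by linarith
  have h1β : (0:ℝ) < 1 - β := by linarith
  have hgeo : Summable (fun t : ℕ => β ^ t) := summable_geometric_of_lt_one hβ0.le hβ2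
  have hgeos : ∑' t : ℕ, β ^ t = (1 - β)⁻¹ := tsum_geometric_of_lt_one hβ0.le hβ2
  -- the series at the candidate plan
  have hsq : Real.sqrt ((1 - β) ^ 2) = 1 - β := Real.sqrt_sq h1β.le
  have hindsq : ∀ t : ℕ, Real.sqrt (if t = 0 then (1:ℝ) else 0) = (if t = 0 then (1:ℝ) else 0) := by
    intro t; split <;> simp
  have hconstr : (∑' t : ℕ, β ^ t * (Real.sqrt ((1 - β) ^ 2)
          - Real.sqrt (if t = 0 then (1 : ℝ) else 0))) = 0 := by
    have heq : (fun t : ℕ => β ^ t * (Real.sqrt ((1 - β) ^ 2)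
          - Real.sqrt (if t = 0 then (1 : ℝ) else 0)))
        = fun t : ℕ => β ^ t * (1 - β) - (if t = 0 then (1:ℝ) else 0) := by
      funext t
      rw [hsq, hindsq, mul_sub]
      congr 1
      split <;> simp_all
    rw [heq, Summable.tsum_sub (hgeo.mul_right _) (aux_ind_summable 1), tsum_mul_right, hgeos,
      tsum_ite_eq (0 : ℕ) (fun _ => (1:ℝ))]
    field_simp
    ring
  have hval : (∑' t : ℕ, β ^ t * ((if t = 0 then (1 : ℝ) else 0) - (1 - β) ^ 2)) = β := by
    have heq : (fun t : ℕ => β ^ t * ((if t = 0 then (1 : ℝ) else 0) - (1 - β) ^ 2))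
        = fun t : ℕ => (if t = 0 then (1:ℝ) else 0) - β ^ t * (1 - β) ^ 2 := by
      funext t
      rw [mul_sub]
      congr 1
      split <;> simp_all
    rw [heq, Summable.tsum_sub (aux_ind_summable 1) (hgeo.mul_right _), tsum_mul_right, hgeos,
      tsum_ite_eq (0 : ℕ) (fun _ => (1:ℝ))]
    field_simp
    ring
  refine ⟨⟨⟨fun _ => (1 - β) ^ 2, fun t => if t = 0 then 1 else 0,
      ⟨(1 - β) ^ 2, fun t => le_refl _⟩, fun t => sq_nonneg _,
      fun t => by dsimp only; split <;> norm_num,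
      hconstr.ge, hval.symm⟩, ?_⟩, hconstr.ge, hval⟩
  -- upper bound
  rintro z ⟨c, l, ⟨C, hC⟩, hc0, hl, hpc, hz⟩
  have hl0 : ∀ t, 0 ≤ l t := fun t => (hl t).1
  have hl1 : ∀ t, l t ≤ 1 := fun t => (hl t).2
  have hsl : Summable (fun t : ℕ => β ^ t * l t) := aux_summable hβ0.le hβ2 hl0 hl1
  have hsc : Summable (fun t : ℕ => β ^ t * c t) := aux_summable hβ0.le hβ2 hc0 hC
  have hssl : Summable (fun t : ℕ => β ^ t * Real.sqrt (l t)) :=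
    aux_summable hβ0.le hβ2 (fun t => Real.sqrt_nonneg _)
      (fun t => Real.sqrt_le_one.2 (hl1 t))
  have hssc : Summable (fun t : ℕ => β ^ t * Real.sqrt (c t)) :=
    aux_summable hβ0.le hβ2 (fun t => Real.sqrt_nonneg _)
      (fun t => Real.sqrt_le_sqrt (hC t))
  set T := ∑' t : ℕ, β ^ t * Real.sqrt (c t) with hT
  set S := ∑' t : ℕ, β ^ t * Real.sqrt (l t) with hS
  set K := ∑' t : ℕ, β ^ t * c t with hK
  set L := ∑' t : ℕ, β ^ t * l t with hL
  -- constraint: S ≤ T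
  have hST : S ≤ T := by
    have : (∑' t : ℕ, β ^ t * (Real.sqrt (c t) - Real.sqrt (l t))) = T - S := by
      have heq : (fun t : ℕ => β ^ t * (Real.sqrt (c t) - Real.sqrt (l t)))
          = fun t : ℕ => β ^ t * Real.sqrt (c t) - β ^ t * Real.sqrt (l t) := by
        funext t; ring
      rw [heq, Summable.tsum_sub hssc hssl]
    linarith [this ▸ hpc]
  have hS0 : 0 ≤ S :=
    tsum_nonneg fun t => mul_nonneg (pow_nonneg hβ0.le t) (Real.sqrt_nonneg _)
  -- K ≥ (1-β) S²  via pointwise  c ≥ 2γ√c − γ²  with γ = (1-β)S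
  have hKS : (1 - β) * S ^ 2 ≤ K := by
    set γ : ℝ := (1 - β) * S with hγ
    have hγ0 : 0 ≤ γ := mul_nonneg h1β.le hS0
    have hpt : ∀ t : ℕ, 2 * γ * (β ^ t * Real.sqrt (c t)) - γ ^ 2 * β ^ t ≤ β ^ t * c t := by
      intro t
      have h := Real.sq_sqrt (hc0 t)
      have hb := pow_nonneg hβ0.le t
      nlinarith [sq_nonneg (Real.sqrt (c t) - γ), mul_le_mul_of_nonneg_left
        (sq_nonneg (Real.sqrt (c t) - γ)) hb]
    have hsum : (∑' t : ℕ, (2 * γ * (β ^ t * Real.sqrt (c t)) - γ ^ 2 * β ^ t))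
        = 2 * γ * T - γ ^ 2 * (1 - β)⁻¹ := by
      rw [Summable.tsum_sub (hssc.mul_left _) (hgeo.mul_left _), tsum_mul_left, tsum_mul_left, hgeos]
    have hle := ((hssc.mul_left (2*γ)).sub (hgeo.mul_left (γ^2))).tsum_le_tsum hpt hsc
    rw [hsum] at hle
    have h2 : 2 * γ * S ≤ 2 * γ * T := by nlinarith
    have hγS : γ ^ 2 * (1 - β)⁻¹ = (1 - β) * S ^ 2 := by
      field_simp [hγ]
      ring
    nlinarith
  -- split off t = 0
  have hLsplit : L = l 0 + ∑' t : ℕ, β ^ (t + 1) * l (t + 1) := by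
    simpa using Summable.tsum_eq_zero_add hsl
  have hSsplit : S = Real.sqrt (l 0) + ∑' t : ℕ, β ^ (t + 1) * Real.sqrt (l (t + 1)) := by
    simpa using Summable.tsum_eq_zero_add hssl
  set a : ℝ := Real.sqrt (l 0) with ha
  set R : ℝ := ∑' t : ℕ, β ^ (t + 1) * Real.sqrt (l (t + 1)) with hR
  have hsl' : Summable (fun t : ℕ => β ^ (t + 1) * l (t + 1)) := by
    simpa [Function.comp_def] using hsl.comp_injective (add_left_injective 1)
  have hssl' : Summable (fun t : ℕ => β ^ (t + 1) * Real.sqrt (l (t + 1))) := by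
    simpa [Function.comp_def] using hssl.comp_injective (add_left_injective 1)
  have hgeo' : Summable (fun t : ℕ => β ^ (t + 1)) := by
    simpa [Function.comp_def] using hgeo.comp_injective (add_left_injective 1)
  have hR0 : 0 ≤ R :=
    tsum_nonneg fun t => mul_nonneg (pow_nonneg hβ0.le _) (Real.sqrt_nonneg _)
  have hRβ : (1 - β) * R ≤ β := by
    have h1 : R ≤ ∑' t : ℕ, β ^ (t + 1) := by
      apply hssl'.tsum_le_tsum _ hgeo'
      intro t
      have := Real.sqrt_le_one.2 (hl1 (t + 1))
      nlinarith [pow_nonneg hβ0.le (t + 1), Real.sqrt_nonneg (l (t+1))]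
    have h2 : ∑' t : ℕ, β ^ (t + 1) = β * (1 - β)⁻¹ := by
      have : (fun t : ℕ => β ^ (t + 1)) = fun t : ℕ => β * β ^ t := by
        funext t; ring
      rw [this, tsum_mul_left, hgeos]
    rw [h2] at h1
    calc (1 - β) * R ≤ (1 - β) * (β * (1 - β)⁻¹) := by nlinarith
      _ = β := by field_simp
  have ha0 : 0 ≤ a := Real.sqrt_nonneg _
  have ha1 : a ≤ 1 := Real.sqrt_le_one.2 (hl1 0)
  have hasq : a ^ 2 = l 0 := Real.sq_sqrt (hl0 0)
  -- L ≤ a² + R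
  have hLaR : L ≤ a ^ 2 + R := by
    rw [hLsplit, hasq]
    have : (∑' t : ℕ, β ^ (t + 1) * l (t + 1)) ≤ R := by
      apply hsl'.tsum_le_tsum _ hssl'
      intro t
      have h0 := hl0 (t + 1)
      have h1 := hl1 (t + 1)
      have hs := Real.sq_sqrt h0
      have hs1 := Real.sqrt_le_one.2 h1
      have hs0 := Real.sqrt_nonneg (l (t + 1))
      have : l (t + 1) ≤ Real.sqrt (l (t + 1)) := by nlinarith
      nlinarith [pow_nonneg hβ0.le (t + 1)]
    linarith
  -- z = L − K
  have hzLK : z = L - K := by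
    rw [hz]
    have heq : (fun t : ℕ => β ^ t * (l t - c t))
        = fun t : ℕ => β ^ t * l t - β ^ t * c t := by
      funext t; ring
    rw [heq, Summable.tsum_sub hsl hsc]
  have hSaR : S = a + R := hSsplit
  rw [hzLK]
  have key : (a ^ 2 + R) - (1 - β) * (a + R) ^ 2 ≤ β := by
    have hR1 : R ≤ 1 := by nlinarith
    have h1 : 0 ≤ (1 - a) * (β - (1 - β) * R) * (1 - R) :=
      mul_nonneg (mul_nonneg (by linarith) (by linarith)) (by linarith)
    have h2 : 0 ≤ a * ((1 - 2 * β) * R + (1 - β) * R ^ 2) :=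
      mul_nonneg ha0 (add_nonneg (mul_nonneg (by linarith) hR0)
        (mul_nonneg (by linarith) (sq_nonneg R)))
    have h3 : 0 ≤ β * a * (1 - a) := mul_nonneg (mul_nonneg hβ0.le ha0) (by linarith)
    nlinarith [h1, h2, h3]
  calc L - K ≤ (a ^ 2 + R) - (1 - β) * S ^ 2 := by linarith
    _ = (a ^ 2 + R) - (1 - β) * (a + R) ^ 2 := by rw [hSaR]
    _ ≤ β := key
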